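/- arXiv:1210.2380 — 2 statements merged into one kernel-verified Lean document; each statement's English description precedes it below -/
import Mathlib

section
/- Let N = 2^p for p ∈ ℕ. For every nonzero frequency k with -N/2+1 ≤ k ≤ N/2, every e ∈ {0,1}, every 0 ≤ n < p, and every 0 ≤ ℓ < 2^n, one has |⟨φ_k, h^e_{n,ℓ}⟩| ≤ min(6·2^{n/2}/|k|, 3π·2^{-n/2}). -/
open Complex Real Finset

set_option maxHeartbeats 1000000
open Complex Real Finset

lemma aux_abs_exp_sub_one (θ : ℝ) :
    ‖Complex.exp (θ * Complex.I) - 1‖ = 2 * |Real.sin (θ / 2)| := by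
  have h : Complex.exp (θ * Complex.I) - 1
      = ((Real.cos θ - 1 : ℝ) : ℂ) + ((Real.sin θ : ℝ) : ℂ) * Complex.I := by
    rw [Complex.exp_mul_I]; push_cast; ring
  rw [h, Complex.norm_def, Complex.normSq_add_mul_I]
  have hs : Real.sin (θ / 2) ^ 2 = 1 / 2 - Real.cos θ / 2 := by
    have := Real.sin_sq_eq_half_sub (θ / 2)
    rwa [show 2 * (θ / 2) = θ by ring] at this
  rw [show (Real.cos θ - 1) ^ 2 + Real.sin θ ^ 2 = (2 * |Real.sin (θ / 2)|) ^ 2 by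
    have := Real.sin_sq_add_cos_sq θ
    have h2 : |Real.sin (θ / 2)| ^ 2 = Real.sin (θ / 2) ^ 2 := sq_abs _
    nlinarith [hs, this]]
  exact Real.sqrt_sq (by positivity)

lemma aux_geom_le (z : ℂ) (hz : ‖z‖ = 1) (m : ℕ) :
    ‖∑ j ∈ Finset.range m, z ^ j‖ ≤ m := by
  calc ‖∑ j ∈ Finset.range m, z ^ j‖
      ≤ ∑ j ∈ Finset.range m, ‖z ^ j‖ := by
        simpa using norm_sum_le (Finset.range m) (fun j => z ^ j)
    _ = m := by simp [norm_pow, hz]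

lemma aux_geom_le' (z : ℂ) (hz : ‖z‖ = 1) (h1 : 0 < ‖z - 1‖) (m : ℕ) :
    ‖∑ j ∈ Finset.range m, z ^ j‖ ≤ 2 / ‖z - 1‖ := by
  have h := geom_sum_mul z m
  have habs : ‖∑ j ∈ Finset.range m, z ^ j‖ * ‖z - 1‖
      = ‖z ^ m - 1‖ := by rw [← norm_mul, h]
  have hb : ‖z ^ m - 1‖ ≤ 2 := by
    calc ‖z ^ m - 1‖ ≤ ‖z ^ m‖ + ‖(1:ℂ)‖ := by
          simpa using norm_sub_le (z ^ m) 1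
      _ = 2 := by rw [norm_pow, hz, one_pow, norm_one]; norm_num
  rw [le_div_iff₀ h1]
  rw [habs]; exact hb

noncomputable def haarBlock (p n ℓ e t : ℕ) : ℂ :=
  if ℓ * 2 ^ (p - n) ≤ t ∧ t < ℓ * 2 ^ (p - n) + 2 ^ (p - n - 1) then
    (((2 : ℝ) ^ (((n : ℝ) - p) / 2) : ℝ) : ℂ)
  else if ℓ * 2 ^ (p - n) + 2 ^ (p - n - 1) ≤ t ∧ t < (ℓ + 1) * 2 ^ (p - n) then
    (-1 : ℂ) ^ e * (((2 : ℝ) ^ (((n : ℝ) - p) / 2) : ℝ) : ℂ)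
  else 0

noncomputable def fourierVec (p : ℕ) (k : ℤ) (t : ℕ) : ℂ :=
  ((1 / Real.sqrt (2 ^ p) : ℝ) : ℂ) *
    Complex.exp (2 * π * Complex.I * t * k / 2 ^ p)

/-- Univariate local incoherence: for every nonzero frequency `k` with
`-N/2+1 ≤ k ≤ N/2` (`N = 2^p`), every `e ∈ {0,1}`, `0 ≤ n < p`, `0 ≤ ℓ < 2^n`,
one has `|⟨φ_k, h^e_{n,ℓ}⟩| ≤ min(6·2^{n/2}/|k|, 3π·2^{-n/2})`. -/
theorem stmt_4 (p n ℓ e : ℕ) (hn : n < p) (hℓ : ℓ < 2 ^ n) (he : e ≤ 1)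
    (k : ℤ) (hk : k ≠ 0) (hk1 : -(2 ^ p : ℤ) / 2 + 1 ≤ k) (hk2 : k ≤ 2 ^ p / 2) :
    ‖∑ t ∈ Finset.range (2 ^ p),
        (starRingEnd ℂ) (fourierVec p k t) * haarBlock p n ℓ e t‖ ≤
      min (6 * (2 : ℝ) ^ ((n : ℝ) / 2) / |(k : ℝ)|)
        (3 * π * (2 : ℝ) ^ (-(n : ℝ) / 2)) := by
  -- definitions
  set m : ℕ := 2 ^ (p - n - 1) with hm
  set a : ℕ := ℓ * 2 ^ (p - n) with ha
  set θ : ℝ := -(2 * π * (k:ℝ) / 2 ^ p) with hθ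
  set z : ℂ := Complex.exp (θ * Complex.I) with hz
  set r : ℝ := 1 / Real.sqrt (2 ^ p) with hr
  set cR : ℝ := (2 : ℝ) ^ (((n : ℝ) - p) / 2) with hc
  set S : ℂ := ∑ j ∈ Finset.range m, z ^ j with hS
  have hLm : 2 ^ (p - n) = 2 * m := by rw [hm, ← pow_succ']; congr 1; omega
  have h2m : (ℓ + 1) * 2 ^ (p - n) = a + 2 * m := by rw [ha, hLm]; ring
  have haN : a + 2 * m ≤ 2 ^ p := by
    rw [← h2m]
    calc (ℓ+1) * 2^(p-n) ≤ 2^n * 2^(p-n) := Nat.mul_le_mul_right _ hℓ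
      _ = 2^p := by rw [← pow_add]; congr 1; omega
  have hconj : ∀ t : ℕ, (starRingEnd ℂ) (fourierVec p k t) = (r : ℂ) * z ^ t := by
    intro t
    rw [fourierVec, map_mul, Complex.conj_ofReal, hz, ← Complex.exp_nat_mul,
      ← Complex.exp_conj]
    congr 1
    simp only [map_div₀, map_mul, Complex.conj_I, map_pow, map_ofNat,
      Complex.conj_natCast, map_intCast, Complex.conj_ofReal]
    rw [hθ]
    push_cast
    ring
  have hshift : ∀ s : ℕ, (∑ t ∈ Finset.Ico s (s + m), z ^ t) = z ^ s * S := by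
    intro s
    rw [Finset.sum_Ico_eq_sum_range]
    simp only [add_tsub_cancel_left]
    rw [hS, Finset.mul_sum]
    exact Finset.sum_congr rfl fun j _ => by rw [pow_add]
  have hvanish : ∀ t ∈ Finset.range (2^p), t ∉ Finset.Ico a (a + 2*m) →
      (starRingEnd ℂ) (fourierVec p k t) * haarBlock p n ℓ e t = 0 := by
    intro t _ htn
    rw [Finset.mem_Ico] at htn
    have h0 : haarBlock p n ℓ e t = 0 := by
      unfold haarBlock
      rw [← ha, ← hm, h2m, show a + 2^(p-n-1) = a + m from by rw [hm]]
      split_ifs with h1 h2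
      · omega
      · omega
      · rfl
    rw [h0, mul_zero]
  have hrestrict : (∑ t ∈ Finset.range (2 ^ p),
        (starRingEnd ℂ) (fourierVec p k t) * haarBlock p n ℓ e t)
      = ∑ t ∈ Finset.Ico a (a + 2*m),
        (starRingEnd ℂ) (fourierVec p k t) * haarBlock p n ℓ e t := by
    refine (Finset.sum_subset ?_ hvanish).symm
    intro x hx
    rw [Finset.mem_Ico] at hx
    rw [Finset.mem_range]
    omega
  have hIco : Finset.Ico a (a + 2*m) = Finset.Ico a (a+m) ∪ Finset.Ico (a+m) (a+2*m) := by
    rw [Finset.Ico_union_Ico_eq_Ico (by omega) (by omega)]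
  have hb1 : ∀ t ∈ Finset.Ico a (a+m), haarBlock p n ℓ e t = (cR : ℂ) := by
    intro t ht
    rw [Finset.mem_Ico] at ht
    unfold haarBlock
    rw [← ha, ← hm, ← hc, if_pos ht]
  have hb2 : ∀ t ∈ Finset.Ico (a+m) (a+2*m), haarBlock p n ℓ e t = (-1:ℂ)^e * (cR : ℂ) := by
    intro t ht
    rw [Finset.mem_Ico] at ht
    unfold haarBlock
    rw [← ha, ← hm, ← hc, h2m, if_neg (by omega), if_pos ht]
  have h1sum : (∑ t ∈ Finset.Ico a (a+m),
        (starRingEnd ℂ) (fourierVec p k t) * haarBlock p n ℓ e t)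
      = (r:ℂ) * (cR:ℂ) * (z ^ a * S) := by
    rw [Finset.sum_congr rfl (fun t ht => by rw [hconj t, hb1 t ht])]
    rw [Finset.sum_congr rfl (fun t _ => show (r:ℂ) * z^t * (cR:ℂ) = ((r:ℂ)*(cR:ℂ))*z^t from by ring),
      ← Finset.mul_sum, hshift a]
  have h2sum : (∑ t ∈ Finset.Ico (a+m) (a+2*m),
        (starRingEnd ℂ) (fourierVec p k t) * haarBlock p n ℓ e t)
      = (r:ℂ) * (cR:ℂ) * ((-1:ℂ)^e * (z ^ (a+m) * S)) := by
    rw [Finset.sum_congr rfl (fun t ht => by rw [hconj t, hb2 t ht])]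
    rw [Finset.sum_congr rfl (fun t _ => show (r:ℂ) * z^t * ((-1:ℂ)^e * (cR:ℂ))
        = ((r:ℂ)*(cR:ℂ)*(-1:ℂ)^e)*z^t from by ring), ← Finset.mul_sum,
      show a + 2*m = (a+m) + m from by ring, hshift (a+m)]
    ring
  have hsplit : (∑ t ∈ Finset.range (2 ^ p),
        (starRingEnd ℂ) (fourierVec p k t) * haarBlock p n ℓ e t)
      = (r:ℂ) * (cR:ℂ) * (z ^ a * S + (-1:ℂ)^e * (z ^ (a+m) * S)) := by
    rw [hrestrict, hIco, Finset.sum_union (by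
      simp [Finset.disjoint_left, Finset.mem_Ico]
      omega), h1sum, h2sum]
    ring
  -- analytic facts
  have hzabs : ‖z‖ = 1 := by rw [hz]; exact Complex.norm_exp_ofReal_mul_I θ
  have hppos : (0:ℝ) < 2^p := by positivity
  have hrpos : 0 < r := by rw [hr]; positivity
  have hcpos : 0 < cR := by rw [hc]; positivity
  have hkpos : 0 < |(k:ℝ)| := by
    simp only [abs_pos, ne_eq, Int.cast_eq_zero]; exact hk
  have hk_le : |(k:ℝ)| ≤ 2^(p-1) := by
    have hpow : (2:ℤ)^p = 2*2^(p-1) := by rw [← pow_succ']; congr 1; omega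
    have h1 : -(2^(p-1):ℤ) ≤ k ∧ k ≤ 2^(p-1) := by omega
    rw [abs_le]
    constructor
    · have : ((-(2^(p-1):ℤ) : ℤ) : ℝ) ≤ ((k:ℤ):ℝ) := by exact_mod_cast h1.1
      push_cast at this ⊢; linarith
    · have : ((k:ℤ):ℝ) ≤ ((2^(p-1):ℤ) : ℝ) := by exact_mod_cast h1.2
      push_cast at this ⊢; linarith
  have hpow2 : (2:ℝ)^p = 2*2^(p-1) := by rw [← pow_succ']; congr 1; omega
  have hθ2 : |θ/2| = π * (|(k:ℝ)|/2^p) := by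
    rw [hθ, show -(2 * π * (k:ℝ) / 2 ^ p)/2 = -(π * ((k:ℝ)/2^p)) from by ring,
      abs_neg, abs_mul, abs_of_pos Real.pi_pos, abs_div, abs_of_pos hppos]
  have hθ2le : |θ/2| ≤ π/2 := by
    rw [hθ2]
    have h1 : |(k:ℝ)|/2^p ≤ 1/2 := by rw [div_le_div_iff₀ hppos (by norm_num), hpow2]; linarith
    calc π * (|(k:ℝ)|/2^p) ≤ π * (1/2) := mul_le_mul_of_nonneg_left h1 Real.pi_pos.le
      _ = π/2 := by ring
  have hbb := abs_le.mp hθ2le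
  have hsin_eq : Real.sin |θ/2| = |Real.sin (θ/2)| := by
    rcases le_or_gt 0 (θ/2) with h | h
    · rw [_root_.abs_of_nonneg h, _root_.abs_of_nonneg
        (Real.sin_nonneg_of_nonneg_of_le_pi h (by linarith [Real.pi_pos]))]
    · rw [abs_of_neg h, Real.sin_neg, _root_.abs_of_nonpos
        (Real.sin_nonpos_of_nonpos_of_neg_pi_le h.le (by linarith [Real.pi_pos]))]
  have hz1 : 4 * |(k:ℝ)| / 2^p ≤ ‖z - 1‖ := by
    rw [hz, aux_abs_exp_sub_one]
    have hj : 2/π * |θ/2| ≤ Real.sin |θ/2| := Real.mul_le_sin (abs_nonneg _) hθ2le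
    rw [hsin_eq] at hj
    have : 2/π * |θ/2| = 2 * (|(k:ℝ)|/2^p) := by
      rw [hθ2]; field_simp
    rw [this] at hj
    calc 4 * |(k:ℝ)| / 2^p = 2 * (2 * (|(k:ℝ)|/2^p)) := by ring
      _ ≤ 2 * |Real.sin (θ/2)| := by linarith
  have hSm : ‖S‖ ≤ m := by rw [hS]; exact aux_geom_le z hzabs m
  have hz1pos : 0 < ‖z - 1‖ := lt_of_lt_of_le (by positivity) hz1
  have hSk : ‖S‖ ≤ 2^p / (2*|(k:ℝ)|) := by
    calc ‖S‖ ≤ 2 / ‖z-1‖ := by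
          rw [hS]; exact aux_geom_le' z hzabs hz1pos m
      _ ≤ 2 / (4 * |(k:ℝ)| / 2^p) := by gcongr
      _ = 2^p / (2*|(k:ℝ)|) := by field_simp; ring
  have habs_total : ‖∑ t ∈ Finset.range (2 ^ p),
        (starRingEnd ℂ) (fourierVec p k t) * haarBlock p n ℓ e t‖
      ≤ r * cR * (2 * ‖S‖) := by
    rw [hsplit, norm_mul, norm_mul, Complex.norm_real, Complex.norm_real, Real.norm_eq_abs, Real.norm_eq_abs,
      _root_.abs_of_pos hrpos, _root_.abs_of_pos hcpos]
    have h1 : ‖z ^ a * S + (-1:ℂ)^e * (z ^ (a+m) * S)‖ ≤ 2 * ‖S‖ := by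
      calc ‖z ^ a * S + (-1:ℂ)^e * (z ^ (a+m) * S)‖
          ≤ ‖z ^ a * S‖ + ‖(-1:ℂ)^e * (z ^ (a+m) * S)‖ := by
            simpa using norm_add_le (z ^ a * S) ((-1:ℂ)^e * (z ^ (a+m) * S))
        _ = 2 * ‖S‖ := by
            simp [norm_mul, norm_pow, hzabs]
            ring
    rw [mul_assoc, mul_assoc]
    exact mul_le_mul_of_nonneg_left (mul_le_mul_of_nonneg_left h1 hcpos.le) hrpos.le
  have hrval : r = (2:ℝ) ^ (-(p:ℝ)/2) := by
    rw [hr, Real.sqrt_eq_rpow, ← Real.rpow_natCast 2 p,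
      ← Real.rpow_mul (by norm_num : (0:ℝ) ≤ 2), one_div,
      ← Real.rpow_neg (by norm_num : (0:ℝ) ≤ 2)]
    congr 1; ring
  have h2mval : 2*(m:ℝ) = (2:ℝ)^((p:ℝ)-(n:ℝ)) := by
    have h1 : ((2^(p-n) : ℕ) : ℝ) = 2*(m:ℝ) := by rw [hLm]; push_cast; ring
    rw [← h1]
    push_cast
    rw [← Real.rpow_natCast 2 (p-n), Nat.cast_sub hn.le]
  have hmval : (m:ℝ) = (2:ℝ)^((p:ℝ)-(n:ℝ)) / 2 := by
    rw [← h2mval]; ring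
  have E1 : r * cR * (2*(m:ℝ)) = (2:ℝ)^(-(n:ℝ)/2) := by
    rw [hrval, hc, h2mval, ← Real.rpow_add (by norm_num : (0:ℝ) < 2),
      ← Real.rpow_add (by norm_num : (0:ℝ) < 2)]
    congr 1; ring
  have E2 : r * cR * ((2:ℝ)^p) = (2:ℝ)^((n:ℝ)/2) := by
    rw [hrval, hc, ← Real.rpow_natCast 2 p, ← Real.rpow_add (by norm_num : (0:ℝ) < 2),
      ← Real.rpow_add (by norm_num : (0:ℝ) < 2)]
    congr 1; ring
  rw [le_min_iff]
  constructor
  · calc ‖∑ t ∈ Finset.range (2 ^ p),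
          (starRingEnd ℂ) (fourierVec p k t) * haarBlock p n ℓ e t‖
        ≤ r * cR * (2 * ‖S‖) := habs_total
      _ ≤ r * cR * (2 * (2^p / (2*|(k:ℝ)|))) :=
          mul_le_mul_of_nonneg_left (mul_le_mul_of_nonneg_left hSk (by norm_num))
            (mul_pos hrpos hcpos).le
      _ = (r * cR * ((2:ℝ)^p)) / |(k:ℝ)| := by field_simp
      _ = (2:ℝ)^((n:ℝ)/2) / |(k:ℝ)| := by rw [E2]
      _ ≤ 6 * (2:ℝ)^((n:ℝ)/2) / |(k:ℝ)| := by
          rw [div_le_div_iff_of_pos_right hkpos]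
          nlinarith [Real.rpow_pos_of_pos (by norm_num : (0:ℝ) < 2) ((n:ℝ)/2)]
  · calc ‖∑ t ∈ Finset.range (2 ^ p),
          (starRingEnd ℂ) (fourierVec p k t) * haarBlock p n ℓ e t‖
        ≤ r * cR * (2 * ‖S‖) := habs_total
      _ ≤ r * cR * (2 * (m:ℝ)) :=
          mul_le_mul_of_nonneg_left (mul_le_mul_of_nonneg_left hSm (by norm_num))
            (mul_pos hrpos hcpos).le
      _ = (2:ℝ)^(-(n:ℝ)/2) := E1
      _ ≤ 3 * π * (2:ℝ)^(-(n:ℝ)/2) := by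
          apply le_mul_of_one_le_left
            (Real.rpow_nonneg (by norm_num) _)
          nlinarith [Real.pi_gt_three]
end

section
/- Let N = 2^p. For any adjacent pixel pair (t_1,t_2) and (t_1,t_2+1) in [N]×[N], the number of bivariate Haar basis elements h^e_{n,ℓ} with h^e_{n,ℓ}(t_1,t_2+1) ≠ h^e_{n,ℓ}(t_1,t_2) is at most 6p. -/
open Finset

noncomputable def haar2 (p n ℓ₁ ℓ₂ e₁ e₂ t₁ t₂ : ℕ) : ℂ :=
  haarBlock p n ℓ₁ e₁ t₁ * haarBlock p n ℓ₂ e₂ t₂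

lemma haarBlock_support {p n ℓ e t : ℕ} (h : haarBlock p n ℓ e t ≠ 0) :
    t / 2 ^ (p - n) = ℓ := by
  have hq : (2:ℕ) ^ (p - n - 1) ≤ 2 ^ (p - n) :=
    Nat.pow_le_pow_right (by norm_num) (Nat.sub_le _ _)
  unfold haarBlock at h
  split_ifs at h with h1 h2
  · refine Nat.div_eq_of_lt_le h1.1 ?_
    calc t < ℓ * 2 ^ (p - n) + 2 ^ (p - n - 1) := h1.2
      _ ≤ (ℓ + 1) * 2 ^ (p - n) := by
        rw [add_mul, one_mul]; exact Nat.add_le_add_left hq _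
  · exact Nat.div_eq_of_lt_le (le_trans (Nat.le_add_right _ _) h2.1) h2.2
  · exact absurd rfl h

lemma haar2_facts {p n ℓ₁ ℓ₂ e₁ e₂ t₁ t₂ : ℕ}
    (h : haar2 p n ℓ₁ ℓ₂ e₁ e₂ t₁ (t₂ + 1) ≠ haar2 p n ℓ₁ ℓ₂ e₁ e₂ t₁ t₂) :
    ℓ₁ = t₁ / 2 ^ (p - n) ∧
      (ℓ₂ = t₂ / 2 ^ (p - n) ∨ ℓ₂ = (t₂ + 1) / 2 ^ (p - n)) := by
  have h1 : haarBlock p n ℓ₁ e₁ t₁ ≠ 0 := by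
    intro h0; exact h (by simp [haar2, h0])
  have h2 : haarBlock p n ℓ₂ e₂ (t₂ + 1) ≠ haarBlock p n ℓ₂ e₂ t₂ := by
    intro h0; exact h (by simp [haar2, h0])
  refine ⟨(haarBlock_support h1).symm, ?_⟩
  by_cases h3 : haarBlock p n ℓ₂ e₂ t₂ = 0
  · exact Or.inr (haarBlock_support (fun h0 => h2 (h0.trans h3.symm))).symm
  · exact Or.inl (haarBlock_support h3).symm

/-- For `N = 2^p` and any adjacent pixel pair `(t₁,t₂)`, `(t₁,t₂+1)`, at most `6p`
bivariate Haar basis elements `h^e_{n,ℓ}` (indexed by `e ∈ {(0,1),(1,0),(1,1)}`,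
`0 ≤ n < p`, `0 ≤ ℓ₁,ℓ₂ < 2^n`) change value across that edge. -/
theorem stmt_9 (p t₁ t₂ : ℕ) (ht₁ : t₁ < 2 ^ p) (ht₂ : t₂ + 1 < 2 ^ p) :
    ((((Finset.range 2 ×ˢ Finset.range 2) ×ˢ
        Finset.range p ×ˢ Finset.range (2 ^ p) ×ˢ Finset.range (2 ^ p)).filter
      (fun x : (ℕ × ℕ) × ℕ × ℕ × ℕ =>
        ¬(x.1.1 = 0 ∧ x.1.2 = 0) ∧
        x.2.2.1 < 2 ^ x.2.1 ∧ x.2.2.2 < 2 ^ x.2.1 ∧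
        haar2 p x.2.1 x.2.2.1 x.2.2.2 x.1.1 x.1.2 t₁ (t₂ + 1) ≠
          haar2 p x.2.1 x.2.2.1 x.2.2.2 x.1.1 x.1.2 t₁ t₂)).card : ℕ) ≤ 6 * p := by
  classical
  have h3 : (((Finset.range 2 ×ˢ Finset.range 2)).filter
      fun e : ℕ × ℕ => ¬(e.1 = 0 ∧ e.2 = 0)).card = 3 := by decide
  have hcard : ((Finset.range p) ×ˢ
      ((((Finset.range 2 ×ˢ Finset.range 2)).filter
        fun e : ℕ × ℕ => ¬(e.1 = 0 ∧ e.2 = 0)) ×ˢ Finset.range 2)).card = 6 * p := by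
    rw [Finset.card_product, Finset.card_product, h3, Finset.card_range,
      Finset.card_range]
    ring
  rw [← hcard]
  apply Finset.card_le_card_of_injOn
    (fun x : (ℕ × ℕ) × ℕ × ℕ × ℕ =>
      (x.2.1, x.1, if x.2.2.2 = t₂ / 2 ^ (p - x.2.1) then 0 else 1))
  · rintro ⟨⟨a1, a2⟩, n, l, m⟩ hx
    simp only [Finset.mem_coe, Finset.mem_filter, Finset.mem_product, Finset.mem_range] at hx ⊢
    obtain ⟨⟨⟨ha1, ha2⟩, hn, -, -⟩, hne, -, -, -⟩ := hx
    refine ⟨hn, ⟨⟨ha1, ha2⟩, hne⟩, ?_⟩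
    split <;> norm_num
  · rintro ⟨⟨a1, a2⟩, n1, l1, m1⟩ hx ⟨⟨b1, b2⟩, n2, l2, m2⟩ hy hxy
    simp only [Finset.mem_coe, Finset.mem_filter] at hx hy
    obtain ⟨-, -, -, -, hhx⟩ := hx
    obtain ⟨-, -, -, -, hhy⟩ := hy
    obtain ⟨hl1, hm1⟩ := haar2_facts hhx
    obtain ⟨hl2, hm2⟩ := haar2_facts hhy
    simp only [Prod.mk.injEq] at hxy ⊢
    obtain ⟨hn, ⟨he1, he2⟩, hflag⟩ := hxy
    subst hn
    refine ⟨⟨he1, he2⟩, rfl, hl1.trans hl2.symm, ?_⟩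
    by_cases hc1 : m1 = t₂ / 2 ^ (p - n1) <;> by_cases hc2 : m2 = t₂ / 2 ^ (p - n1)
    · exact hc1.trans hc2.symm
    · simp [hc1, hc2] at hflag
    · simp [hc1, hc2] at hflag
    · exact (hm1.resolve_left hc1).trans (hm2.resolve_left hc2).symm
end
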